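/- arXiv:0905.2531 — 5 statements merged into one kernel-verified Lean document; each statement's English description precedes it below -/
import Mathlib

section
/- Let X be a Banach space, A ⊆ X* a convex set, and r > 0. Set U = A + r·B_{X*} and define Ã⁽¹⁾ = ⋃_{n ∈ ℕ} weak*-closure(A ∩ n·B_{X*}). Then the envelope Ũ := ⋃{weak*-closure(B) : B is U-bounded} equals Ã⁽¹⁾ + r·B_{X*}. -/
open Metric NormedSpace Pointwise

variable {X : Type*} [NormedAddCommGroup X] [NormedSpace ℝ X]

/-- Weak* closure of a set of functionals on `X`. -/
noncomputable def wscl (S : Set (StrongDual ℝ X)) : Set (StrongDual ℝ X) :=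
  StrongDual.toWeakDual ⁻¹' closure (StrongDual.toWeakDual '' S)

/-- `B` is a `U`-bounded set: norm-bounded with positive distance to the complement of `U`. -/
def UBounded (U B : Set (StrongDual ℝ X)) : Prop :=
  B ⊆ U ∧ Bornology.IsBounded B ∧ ∃ c > 0, ∀ x ∈ B, ∀ y ∉ U, c ≤ dist x y

/-- The envelope `Ũ`: the union of the weak* closures of all `U`-bounded sets. -/
noncomputable def tildeEnv (U : Set (StrongDual ℝ X)) : Set (StrongDual ℝ X) :=
  ⋃ B ∈ {B | UBounded U B}, wscl B

/-- `A⁽¹⁾`: the set of weak* limits of bounded nets from `A`. -/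
noncomputable def dOne (A : Set (StrongDual ℝ X)) : Set (StrongDual ℝ X) :=
  ⋃ n : ℕ, wscl (A ∩ ball 0 (n : ℝ))

/-- Key geometric fact: if the ball of radius `c` around `b` is contained in `A + ball 0 r`
with `A` convex, then `b` is within distance `r - c` of `A`. -/
lemma infDist_le_of_forall_add_mem {E : Type*} [NormedAddCommGroup E] [NormedSpace ℝ E]
    {A : Set E} (hA : Convex ℝ A) {r c : ℝ} (hc : 0 < c) (hcr : c ≤ r)
    {b : E} (hb : ∀ z : E, ‖z‖ < c → b + z ∈ A + ball 0 r) :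
    Metric.infDist b A ≤ r - c := by
  have hAne : A.Nonempty := by
    obtain ⟨a, ha, -, -, -⟩ := Set.mem_add.mp (hb 0 (by simpa using hc))
    exact ⟨a, ha⟩
  set d := Metric.infDist b A with hd
  have hd0 : 0 ≤ d := Metric.infDist_nonneg
  have key : ∀ ε : ℝ, 0 < ε → ε < c → d * (c - ε + d) ≤ (d + ε) * r := by
    intro ε hε hεc
    obtain ⟨a, ha, hba⟩ := (Metric.infDist_lt_iff hAne).mp
      (show d < d + ε by linarith)
    rcases eq_or_ne b a with rfl | hne
    · have h00 : d ≤ dist b b := Metric.infDist_le_dist_of_mem ha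
      simp at h00
      have : d = 0 := le_antisymm h00 hd0
      nlinarith
    · set t := ‖b - a‖ with ht
      have ht0 : 0 < t := by simpa [ht, sub_eq_zero] using hne
      have htd : d ≤ t := by
        simpa [hd, dist_eq_norm] using Metric.infDist_le_dist_of_mem ha
      have htε : t < d + ε := by simpa [ht, dist_eq_norm] using hba
      set s := c - ε with hs
      have hs0 : 0 < s := by simp [hs]; linarith
      have hst : 0 < s + t := by linarith
      have hu : ‖(s / t) • (b - a)‖ < c := by
        rw [norm_smul, Real.norm_eq_abs, abs_of_pos (by positivity)]
        rw [div_mul_cancel₀ _ ht0.ne']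
        linarith
      obtain ⟨a', ha', w, hw, haw⟩ := Set.mem_add.mp (hb _ hu)
      set l := s / (s + t) with hl
      have hl0 : 0 ≤ l := by positivity
      have hl1 : 0 ≤ 1 - l := by
        have : l ≤ 1 := by rw [hl, div_le_one hst]; linarith
        linarith
      have hmem : (1 - l) • a' + l • a ∈ A := hA ha' ha hl1 hl0 (by ring)
      have hkey : b = ((1 - l) • a' + l • a) + (1 - l) • w := by
        have hw' : w = b + (s / t) • (b - a) - a' := by
          rw [← haw]; abel
        rw [hw']
        have hD : c - ε + t ≠ 0 := by
          intro h; rw [show c - ε + t = s + t by rw [hs]] at h; linarith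
        have hT : t ≠ 0 := ht0.ne'
        have hst' : s + t ≠ 0 := hst.ne'
        match_scalars <;> (rw [hl]; field_simp; try ring)
      have hdist : d ≤ (1 - l) * ‖w‖ := by
        calc d ≤ dist b ((1 - l) • a' + l • a) := Metric.infDist_le_dist_of_mem hmem
        _ = ‖(1 - l) • w‖ := by
              rw [dist_eq_norm]
              congr 1
              rw [hkey]; abel
        _ = (1 - l) * ‖w‖ := by rw [norm_smul, Real.norm_eq_abs, abs_of_nonneg hl1]
      have hwr : ‖w‖ < r := by simpa using hw
      have h1 : d ≤ (1 - l) * r := by nlinarith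
      have h2 : (1 - l) = t / (s + t) := by rw [hl]; field_simp; ring
      have h3 : d * (s + t) ≤ t * r := by
        have := h1
        rw [h2] at this
        calc d * (s + t) ≤ (t / (s + t) * r) * (s + t) := by nlinarith
        _ = t * r := by field_simp
      nlinarith
  have hmain : d * (c + d) ≤ d * r := by
    by_contra h
    push_neg at h
    set gap := d * (c + d) - d * r with hgap
    have hgap0 : 0 < gap := by linarith
    set ε := min (c / 2) (gap / (d + r + 1)) with hε
    have hdr : 0 < d + r + 1 := by linarith
    have hε0 : 0 < ε := lt_min (by linarith) (div_pos hgap0 hdr)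
    have hεc : ε < c := lt_of_le_of_lt (min_le_left _ _) (by linarith)
    have hεg : ε * (d + r + 1) ≤ gap := by
      have h1 : ε ≤ gap / (d + r + 1) := min_le_right _ _
      rw [le_div_iff₀ hdr] at h1
      linarith
    have := key ε hε0 hεc
    nlinarith
  rcases eq_or_lt_of_le hd0 with h0 | h0
  · linarith
  · nlinarith

lemma wscl_mono {S T : Set (StrongDual ℝ X)} (h : S ⊆ T) : wscl S ⊆ wscl T :=
  Set.preimage_mono (closure_mono (Set.image_mono h))

lemma image_closedBall_compact (ρ : ℝ) :
    IsCompact (StrongDual.toWeakDual '' closedBall (0 : StrongDual ℝ X) ρ) := by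
  have h := WeakDual.isCompact_closedBall (𝕜 := ℝ) (E := X) 0 ρ
  convert h using 1
  ext x
  constructor
  · rintro ⟨y, hy, rfl⟩
    simpa using hy
  · intro hx
    exact ⟨WeakDual.toStrongDual x, hx, rfl⟩

lemma subset_image_closedBall {S : Set (StrongDual ℝ X)} {ρ : ℝ} (h : S ⊆ closedBall 0 ρ) :
    StrongDual.toWeakDual '' S ⊆ StrongDual.toWeakDual '' closedBall (0 : StrongDual ℝ X) ρ :=
  Set.image_mono h

/-- Translation invariance of the weak* closure. -/
lemma add_mem_wscl {S : Set (StrongDual ℝ X)} {x : StrongDual ℝ X} (hx : x ∈ wscl S) (y : StrongDual ℝ X) :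
    x + y ∈ wscl (S + {y}) := by
  have himg : StrongDual.toWeakDual '' (S + {y}) =
      (· + StrongDual.toWeakDual y) '' (StrongDual.toWeakDual '' S) := by
    rw [Set.image_add (StrongDual.toWeakDual : StrongDual ℝ X ≃ₗ[ℝ] WeakDual ℝ X)]
    rw [Set.image_singleton, Set.add_singleton]
  have hh := (Homeomorph.addRight (StrongDual.toWeakDual y)).image_closure
      (StrongDual.toWeakDual '' S)
  simp only [Homeomorph.coe_addRight] at hh
  show StrongDual.toWeakDual (x + y) ∈ closure (StrongDual.toWeakDual '' (S + {y}))
  rw [himg, ← hh]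
  exact ⟨StrongDual.toWeakDual x, hx, by simp [map_add]⟩

/-- The compactness (Banach–Alaoglu) step: adding a ball to a bounded set enlarges its weak*
closure by at most the corresponding closed ball. -/
lemma wscl_add_ball_subset {S : Set (StrongDual ℝ X)} {n ρ : ℝ} (hS : S ⊆ closedBall 0 n) :
    wscl (S + ball (0 : StrongDual ℝ X) ρ) ⊆ wscl S + closedBall (0 : StrongDual ℝ X) ρ := by
  have hK1 : IsCompact (closure (StrongDual.toWeakDual '' S)) := by
    refine (image_closedBall_compact n).of_isClosed_subset isClosed_closure ?_
    exact closure_minimal (subset_image_closedBall hS)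
      (image_closedBall_compact n).isClosed
  have hK2 : IsCompact (StrongDual.toWeakDual '' closedBall (0 : StrongDual ℝ X) ρ) :=
    image_closedBall_compact ρ
  have hKc : IsClosed (closure (StrongDual.toWeakDual '' S) +
      StrongDual.toWeakDual '' closedBall (0 : StrongDual ℝ X) ρ) :=
    (hK1.add hK2).isClosed
  intro x hx
  have hsub : StrongDual.toWeakDual '' (S + ball (0 : StrongDual ℝ X) ρ) ⊆
      closure (StrongDual.toWeakDual '' S) + StrongDual.toWeakDual '' closedBall (0 : StrongDual ℝ X) ρ := by
    rw [Set.image_add (StrongDual.toWeakDual : StrongDual ℝ X ≃ₗ[ℝ] WeakDual ℝ X)]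
    exact Set.add_subset_add subset_closure (Set.image_mono ball_subset_closedBall)
  have hx' : StrongDual.toWeakDual x ∈ closure (StrongDual.toWeakDual '' S) +
      StrongDual.toWeakDual '' closedBall (0 : StrongDual ℝ X) ρ :=
    closure_minimal hsub hKc hx
  obtain ⟨p, hp, q, ⟨w, hw, rfl⟩, hpq⟩ := Set.mem_add.mp hx'
  refine Set.mem_add.mpr ⟨WeakDual.toStrongDual p, ?_, w, hw, ?_⟩
  · show StrongDual.toWeakDual (WeakDual.toStrongDual p) ∈ closure (StrongDual.toWeakDual '' S)
    simpa using hp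
  · have : StrongDual.toWeakDual (WeakDual.toStrongDual p + w) = StrongDual.toWeakDual x := by
      rw [map_add]; simpa using hpq
    exact StrongDual.toWeakDual.injective this

/-- For a convex set `A ⊆ X*` and `r > 0`, the envelope of `U = A + r B_{X*}` is
`A⁽¹⁾ + r B_{X*}`. -/
theorem tildeEnv_add_ball [CompleteSpace X] (A : Set (StrongDual ℝ X)) (hA : Convex ℝ A)
    (r : ℝ) (hr : 0 < r) :
    tildeEnv (A + ball (0 : StrongDual ℝ X) r) = dOne A + ball (0 : StrongDual ℝ X) r := by
  apply Set.Subset.antisymm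
  · -- hard inclusion
    intro x hx
    rw [tildeEnv] at hx
    simp only [Set.mem_iUnion, Set.mem_setOf_eq] at hx
    obtain ⟨B, ⟨hBU, hBb, c, hc, hdist⟩, hxB⟩ := hx
    obtain ⟨M, hM⟩ := hBb.subset_closedBall 0
    set M' := max M 0 with hM'def
    have hM'0 : 0 ≤ M' := le_max_right _ _
    have hM' : B ⊆ closedBall 0 M' :=
      hM.trans (closedBall_subset_closedBall (le_max_left _ _))
    set c' := min c (r / 2) with hc'def
    have hc'0 : 0 < c' := lt_min hc (by linarith)
    have hc'r : c' ≤ r := (min_le_right _ _).trans (by linarith)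
    have hc'2 : c' ≤ r / 2 := min_le_right _ _
    set ρ := r - c' / 2 with hρdef
    have hρ0 : 0 < ρ := by rw [hρdef]; linarith
    have hρr : ρ < r := by rw [hρdef]; linarith
    set n : ℕ := ⌈M' + r⌉₊ + 1 with hndef
    have hnM : M' + r < (n : ℝ) := by
      calc M' + r ≤ (⌈M' + r⌉₊ : ℝ) := Nat.le_ceil _
      _ < (n : ℝ) := by rw [hndef]; push_cast; linarith
    have hsub : B ⊆ (A ∩ ball 0 (n : ℝ)) + ball (0 : StrongDual ℝ X) ρ := by
      intro b hb
      have hbU : ∀ z : StrongDual ℝ X, ‖z‖ < c' → b + z ∈ A + ball 0 r := by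
        intro z hz
        by_contra hzU
        have h1 := hdist b hb (b + z) hzU
        have h2 : dist b (b + z) = ‖z‖ := by
          rw [dist_eq_norm]; simp
        rw [h2] at h1
        have : c' ≤ c := min_le_left _ _
        linarith
      have hinf := infDist_le_of_forall_add_mem hA hc'0 hc'r hbU
      have hAne : A.Nonempty := by
        obtain ⟨a, ha, -, -, -⟩ := Set.mem_add.mp (hBU hb)
        exact ⟨a, ha⟩
      obtain ⟨a, ha, hba⟩ := (Metric.infDist_lt_iff hAne).mp
        (show Metric.infDist b A < ρ from lt_of_le_of_lt hinf (by rw [hρdef]; linarith))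
      have hbM : ‖b‖ ≤ M' := by simpa using hM' hb
      refine Set.mem_add.mpr ⟨a, ⟨ha, ?_⟩, b - a, ?_, by abel⟩
      · rw [mem_ball_zero_iff]
        have h3 : ‖a‖ - ‖b‖ ≤ ‖a - b‖ := norm_sub_norm_le a b
        have h4 : ‖a - b‖ = dist b a := by rw [dist_eq_norm, norm_sub_rev]
        have : ‖a‖ ≤ ‖b‖ + dist b a := by rw [← h4]; linarith
        calc ‖a‖ ≤ ‖b‖ + dist b a := this
        _ < M' + ρ := by linarith
        _ ≤ M' + r := by linarith
        _ < n := hnM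
      · rw [mem_ball_zero_iff, ← dist_eq_norm]
        exact hba
    have h1 : x ∈ wscl ((A ∩ ball 0 (n : ℝ)) + ball 0 ρ) := wscl_mono hsub hxB
    have h2 : x ∈ wscl (A ∩ ball 0 (n : ℝ)) + closedBall (0 : StrongDual ℝ X) ρ :=
      wscl_add_ball_subset (n := (n : ℝ))
        (Set.inter_subset_right.trans ball_subset_closedBall) h1
    obtain ⟨p, hp, q, hq, hpq⟩ := Set.mem_add.mp h2
    exact Set.mem_add.mpr ⟨p, Set.mem_iUnion.mpr ⟨n, hp⟩, q,
      (closedBall_subset_ball hρr) hq, hpq⟩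
  · -- easy inclusion
    intro x hx
    obtain ⟨p, hp, q, hq, rfl⟩ := Set.mem_add.mp hx
    obtain ⟨n, hn⟩ := Set.mem_iUnion.mp hp
    have hqr : ‖q‖ < r := by simpa using hq
    set B := (A ∩ ball 0 (n : ℝ)) + ({q} : Set (StrongDual ℝ X)) with hBdef
    have hUB : UBounded (A + ball (0 : StrongDual ℝ X) r) B := by
      refine ⟨?_, ?_, r - ‖q‖, by linarith, ?_⟩
      · exact Set.add_subset_add Set.inter_subset_left (by simpa using hq)
      · have : B ⊆ closedBall 0 ((n : ℝ) + ‖q‖) := by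
          rintro b ⟨a, ⟨-, haB⟩, q', hq', rfl⟩
          have hq2 : q = q' := (Set.mem_singleton_iff.mp hq').symm
          subst hq2
          rw [mem_closedBall_zero_iff]
          have : ‖a‖ < n := by simpa using haB
          calc ‖a + q‖ ≤ ‖a‖ + ‖q‖ := norm_add_le _ _
          _ ≤ (n : ℝ) + ‖q‖ := by linarith
        exact isBounded_closedBall.subset this
      · rintro z ⟨a, ⟨haA, -⟩, q', hq', rfl⟩ y hy
        have hq2 : q = q' := (Set.mem_singleton_iff.mp hq').symm
        subst hq2
        by_contra hlt
        push_neg at hlt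
        refine hy (Set.mem_add.mpr ⟨a, haA, y - a, ?_, by abel⟩)
        rw [mem_ball_zero_iff]
        have h5 : ‖y - a‖ ≤ ‖y - (a + q)‖ + ‖q‖ := by
          calc ‖y - a‖ = ‖(y - (a + q)) + q‖ := by congr 1; abel
          _ ≤ ‖y - (a + q)‖ + ‖q‖ := norm_add_le _ _
        have h6 : ‖y - (a + q)‖ = dist (a + q) y := by
          rw [dist_eq_norm, norm_sub_rev]
        linarith [h5, h6 ▸ hlt]
    refine Set.mem_biUnion hUB ?_
    exact add_mem_wscl hn q
end

section
/- Let X be a Banach space and U ⊆ X* an open convex set. Then Ũ = Int_{‖·‖}( ⋃_{n ∈ ℕ} weak*-closure(U ∩ n·B_{X*}) ), i.e., the envelope Ũ equals the norm-interior of the set of weak* limits of bounded nets from U. -/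
open Metric NormedSpace Pointwise

variable {X : Type*} [NormedAddCommGroup X] [NormedSpace ℝ X]

lemma mem_wscl_affine (a : ℝ) (c : StrongDual ℝ X) {S : Set (StrongDual ℝ X)} {x : StrongDual ℝ X}
    (hx : x ∈ wscl S) : a • x + c ∈ wscl ((fun z => a • z + c) '' S) := by
  have hψ : Continuous (fun w : WeakDual ℝ X => a • w + StrongDual.toWeakDual c) :=
    (continuous_id.const_smul a).add continuous_const
  have h1 : (fun w : WeakDual ℝ X => a • w + StrongDual.toWeakDual c) (StrongDual.toWeakDual x)
      ∈ closure ((fun w : WeakDual ℝ X => a • w + StrongDual.toWeakDual c) ''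
        (StrongDual.toWeakDual '' S)) :=
    mem_closure_image hψ.continuousAt hx
  have h2 : ((fun w : WeakDual ℝ X => a • w + StrongDual.toWeakDual c) ''
        (StrongDual.toWeakDual '' S)) = StrongDual.toWeakDual '' ((fun z => a • z + c) '' S) := by
    rw [Set.image_image, Set.image_image]
    rfl
  rw [h2] at h1
  exact h1


set_option maxHeartbeats 1000000 in
/-- For an open convex set `U ⊆ X*`, the envelope `Ũ` equals the norm-interior of
`U⁽¹⁾ = ⋃ₙ w*-cl(U ∩ n B_{X*})`. -/
theorem tildeEnv_eq_interior_dOne [CompleteSpace X]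
    (U : Set (StrongDual ℝ X)) (hUo : IsOpen U) (hUc : Convex ℝ U) :
    tildeEnv U = interior (dOne U) := by
  apply Set.Subset.antisymm
  · -- easy direction
    intro x hx
    simp only [tildeEnv, Set.mem_iUnion, Set.mem_setOf_eq] at hx
    obtain ⟨B, ⟨hBU, hBb, c, hc, hcd⟩, hxB⟩ := hx
    rw [mem_interior]
    refine ⟨ball x c, ?_, isOpen_ball, mem_ball_self hc⟩
    intro y hy
    have h1 : (1:ℝ) • x + (y - x) ∈ wscl ((fun z => (1:ℝ) • z + (y - x)) '' B) :=
      mem_wscl_affine 1 (y - x) hxB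
    have hyx : (1:ℝ) • x + (y - x) = y := by rw [one_smul]; abel
    rw [hyx] at h1
    obtain ⟨R, hR⟩ := hBb.exists_norm_le
    obtain ⟨n, hn⟩ := exists_nat_gt (R + ‖y - x‖)
    have hsub : ((fun z => (1:ℝ) • z + (y - x)) '' B) ⊆ U ∩ ball 0 (n : ℝ) := by
      rintro _ ⟨b, hb, rfl⟩
      simp only [one_smul]
      constructor
      · by_contra hbn
        have h2 := hcd b hb _ hbn
        rw [dist_eq_norm] at h2
        have h3 : b - (b + (y - x)) = -(y - x) := by abel
        rw [h3, norm_neg] at h2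
        rw [mem_ball, dist_eq_norm] at hy
        linarith
      · rw [mem_ball_zero_iff]
        calc ‖b + (y - x)‖ ≤ ‖b‖ + ‖y - x‖ := norm_add_le _ _
          _ ≤ R + ‖y - x‖ := by linarith [hR b hb]
          _ < n := hn
    exact Set.mem_iUnion.mpr ⟨n, wscl_mono hsub h1⟩
  · -- hard direction
    intro x hx
    obtain ⟨ε, hε, hball⟩ : ∃ ε > 0, ball x ε ⊆ dOne U :=
      Metric.mem_nhds_iff.mp (mem_interior_iff_mem_nhds.mp hx)
    obtain ⟨n₀, hxn₀⟩ := Set.mem_iUnion.mp (interior_subset hx)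
    have hUne : (U ∩ ball 0 (n₀ : ℝ)).Nonempty := by
      by_contra h
      rw [Set.not_nonempty_iff_eq_empty] at h
      rw [h] at hxn₀
      simp [wscl] at hxn₀
    obtain ⟨y, hyU, -⟩ := hUne
    set t : ℝ := ε / (2 * (‖x - y‖ + 1)) with ht
    have ht0 : 0 < t := by positivity
    have htε : t * ‖x - y‖ < ε := by
      rw [ht, div_mul_eq_mul_div, div_lt_iff₀ (by positivity)]
      nlinarith [norm_nonneg (x - y)]
    set x' : StrongDual ℝ X := x + t • (x - y) with hx'def
    have hx'ball : x' ∈ ball x ε := by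
      rw [mem_ball, dist_eq_norm, hx'def]
      have : x + t • (x - y) - x = t • (x - y) := by abel
      rw [this, norm_smul, Real.norm_eq_abs, abs_of_pos ht0]
      exact htε
    obtain ⟨n, hxn⟩ := Set.mem_iUnion.mp (hball hx'ball)
    set s : ℝ := t / (1 + t) with hs
    have h1t : (0:ℝ) < 1 + t := by linarith
    have hs0 : 0 < s := by positivity
    have hs1 : s < 1 := by rw [hs, div_lt_one h1t]; linarith
    have key : (1 - s) • x' + s • y ∈
        wscl ((fun z => (1 - s) • z + s • y) '' (U ∩ ball 0 (n : ℝ))) :=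
      mem_wscl_affine (1 - s) (s • y) hxn
    have hxx : (1 - s) • x' + s • y = x := by
      rw [hx'def, hs]
      match_scalars <;> field_simp <;> ring
    rw [hxx] at key
    refine Set.mem_iUnion₂.mpr ⟨_, ?_, key⟩
    obtain ⟨r, hr0, hrU⟩ := Metric.isOpen_iff.mp hUo y hyU
    refine ⟨?_, ?_, s * r, by positivity, ?_⟩
    · rintro _ ⟨z, ⟨hzU, _⟩, rfl⟩
      exact hUc hzU hyU (by linarith) hs0.le (by ring)
    · apply (isBounded_closedBall (x := (0 : StrongDual ℝ X)) (r := n + ‖y‖)).subset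
      rintro _ ⟨z, ⟨_, hzn⟩, rfl⟩
      rw [mem_closedBall_zero_iff]
      rw [mem_ball_zero_iff] at hzn
      calc ‖(1 - s) • z + s • y‖ ≤ ‖(1 - s) • z‖ + ‖s • y‖ := norm_add_le _ _
        _ = (1 - s) * ‖z‖ + s * ‖y‖ := by
            rw [norm_smul, norm_smul, Real.norm_eq_abs, Real.norm_eq_abs,
              abs_of_pos (by linarith), abs_of_pos hs0]
        _ ≤ n + ‖y‖ := by nlinarith [norm_nonneg z, norm_nonneg y]
    · rintro _ ⟨z, ⟨hzU, _⟩, rfl⟩ w hw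
      show s * r ≤ dist ((1 - s) • z + s • y) w
      by_contra hlt
      push_neg at hlt
      set b : StrongDual ℝ X := (1 - s) • z + s • y with hb
      have hu : y + s⁻¹ • (w - b) ∈ U := by
        apply hrU
        rw [mem_ball, dist_eq_norm]
        have : y + s⁻¹ • (w - b) - y = s⁻¹ • (w - b) := add_sub_cancel_left y _
        rw [this, norm_smul, Real.norm_eq_abs, abs_of_pos (inv_pos.mpr hs0)]
        rw [dist_eq_norm, ← norm_neg, neg_sub] at hlt
        rw [inv_mul_lt_iff₀ hs0]
        linarith
      have hw' : (1 - s) • z + s • (y + s⁻¹ • (w - b)) = w := by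
        rw [smul_add, smul_inv_smul₀ (ne_of_gt hs0), hb]
        abel
      exact hw (hw' ▸ hUc hzU hu (by linarith) hs0.le (by ring))
end

section
/- Let A = {x ∈ ℓ¹(ℕ×ℕ) : for all k ∈ ℕ, x(k,1) = (1/k)·Σ_{n≥2} x(k,n)}, a linear subspace of ℓ¹(ℕ×ℕ) = c₀(ℕ×ℕ)*. Then A⁽¹⁾ (the set of weak* limits of bounded sequences from A) is norm-dense in ℓ¹(ℕ×ℕ) but is a proper subset: the element x with x(k,1) = 1/k² and x(k,n) = 0 for n ≥ 2 does not belong to A⁽¹⁾. -/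
open Filter

/-- The set of weak* limits of bounded sequences from `S ⊆ ℓ¹(ℕ×ℕ) = c₀(ℕ×ℕ)*`; on bounded
sets the weak* topology is the topology of pointwise convergence. -/
def seqDOne (S : Set (lp (fun _ : ℕ × ℕ => ℝ) 1)) : Set (lp (fun _ : ℕ × ℕ => ℝ) 1) :=
  {x | ∃ u : ℕ → lp (fun _ : ℕ × ℕ => ℝ) 1, (∀ j, u j ∈ S) ∧
    (∃ M : ℝ, ∀ j, ‖u j‖ ≤ M) ∧
    ∀ p : ℕ × ℕ, Tendsto (fun j => (u j : ℕ × ℕ → ℝ) p) atTop (nhds ((x : ℕ × ℕ → ℝ) p))}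

/-- `A = {x ∈ ℓ¹(ℕ×ℕ) : ∀ k, x(k,0) = (1/(k+1))·Σ_{n≥1} x(k,n)}`. -/
def A14 : Set (lp (fun _ : ℕ × ℕ => ℝ) 1) :=
  {x | ∀ k : ℕ,
    (x : ℕ × ℕ → ℝ) (k, 0) = (1 / ((k : ℝ) + 1)) * ∑' n : ℕ, (x : ℕ × ℕ → ℝ) (k, n + 1)}

local notation "E1" => lp (fun _ : ℕ × ℕ => ℝ) 1

lemma summable_norm_coe (f : E1) :
    Summable (fun p : ℕ × ℕ => ‖(f : ℕ × ℕ → ℝ) p‖) := by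
  have h := lp.memℓp f
  rw [memℓp_gen_iff (by norm_num : (0:ℝ) < (1 : ENNReal).toReal)] at h
  simpa using h

lemma norm_eq_tsum (f : E1) : ‖f‖ = ∑' p : ℕ × ℕ, ‖(f : ℕ × ℕ → ℝ) p‖ := by
  rw [lp.norm_eq_tsum_rpow (by norm_num : (0:ℝ) < (1 : ENNReal).toReal)]
  simp

lemma row_summable (f : E1) (k : ℕ) :
    Summable (fun n : ℕ => (f : ℕ × ℕ → ℝ) (k, n)) :=
  ((summable_norm_coe f).of_norm).prod_factor k

lemma row_summable_norm (f : E1) (k : ℕ) :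
    Summable (fun n : ℕ => ‖(f : ℕ × ℕ → ℝ) (k, n)‖) :=
  (summable_norm_coe f).prod_factor k

lemma tail_summable (f : E1) (k : ℕ) :
    Summable (fun n : ℕ => (f : ℕ × ℕ → ℝ) (k, n + 1)) :=
  (row_summable f k).comp_injective (add_left_injective 1)

lemma sum_rows_le (f : E1) (s : Finset ℕ) :
    ∑ k ∈ s, ∑' n : ℕ, ‖(f : ℕ × ℕ → ℝ) (k, n)‖ ≤ ‖f‖ := by
  have hs := summable_norm_coe f
  calc ∑ k ∈ s, ∑' n : ℕ, ‖(f : ℕ × ℕ → ℝ) (k, n)‖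
      ≤ ∑' k : ℕ, ∑' n : ℕ, ‖(f : ℕ × ℕ → ℝ) (k, n)‖ :=
        Summable.sum_le_tsum s (fun k _ => tsum_nonneg (fun n => norm_nonneg _)) hs.prod
    _ = ∑' p : ℕ × ℕ, ‖(f : ℕ × ℕ → ℝ) p‖ := (Summable.tsum_prod hs).symm
    _ = ‖f‖ := (norm_eq_tsum f).symm

lemma tail_bound {x : E1} (hx : x ∈ A14) (k : ℕ) :
    ((k : ℝ) + 1) * ‖(x : ℕ × ℕ → ℝ) (k, 0)‖ ≤ ∑' n : ℕ, ‖(x : ℕ × ℕ → ℝ) (k, n)‖ := by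
  have hk : ((k : ℝ) + 1) ≠ 0 := by positivity
  have htailn : Summable (fun n : ℕ => ‖(x : ℕ × ℕ → ℝ) (k, n + 1)‖) :=
    (row_summable_norm x k).comp_injective (add_left_injective 1)
  have h1 : ((k : ℝ) + 1) * (x : ℕ × ℕ → ℝ) (k, 0)
      = ∑' n : ℕ, (x : ℕ × ℕ → ℝ) (k, n + 1) := by
    rw [hx k]; field_simp
  calc ((k : ℝ) + 1) * ‖(x : ℕ × ℕ → ℝ) (k, 0)‖
      = ‖∑' n : ℕ, (x : ℕ × ℕ → ℝ) (k, n + 1)‖ := by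
        rw [← h1, norm_mul, Real.norm_eq_abs ((k:ℝ)+1), abs_of_pos (by positivity)]
    _ ≤ ∑' n : ℕ, ‖(x : ℕ × ℕ → ℝ) (k, n + 1)‖ := norm_tsum_le_tsum_norm htailn
    _ ≤ ∑' n : ℕ, ‖(x : ℕ × ℕ → ℝ) (k, n)‖ :=
        Summable.tsum_le_tsum_of_inj (fun n => n + 1) (add_left_injective 1)
          (fun c _ => norm_nonneg _) (fun n => le_rfl) htailn (row_summable_norm x k)

lemma part3 (x : E1)
    (hx0 : ∀ k : ℕ, (x : ℕ × ℕ → ℝ) (k, 0) = 1 / ((k : ℝ) + 1) ^ 2)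
    (u : ℕ → E1) (huA : ∀ j, u j ∈ A14) (M : ℝ) (hM : ∀ j, ‖u j‖ ≤ M)
    (hconv : ∀ p : ℕ × ℕ, Tendsto (fun j => (u j : ℕ × ℕ → ℝ) p) atTop
      (nhds ((x : ℕ × ℕ → ℝ) p))) : False := by
  obtain ⟨K, hK⟩ := (Real.tendsto_sum_range_one_div_nat_succ_atTop.eventually_ge_atTop
    (2 * M + 1)).exists
  have hev : ∀ᶠ j in atTop, ∀ k ∈ Finset.range K,
      1 / (2 * ((k : ℝ) + 1) ^ 2) < (u j : ℕ × ℕ → ℝ) (k, 0) := by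
    rw [eventually_all_finset]
    intro k _
    refine (hconv (k, 0)).eventually (eventually_gt_nhds ?_)
    rw [hx0 k]
    have hk : (0:ℝ) < ((k : ℝ) + 1) ^ 2 := by positivity
    rw [div_lt_div_iff₀ (by positivity) hk]
    nlinarith
  obtain ⟨j, hj⟩ := hev.exists
  have key : ∀ k ∈ Finset.range K,
      1 / ((k : ℝ) + 1) ≤ 2 * (((k : ℝ) + 1) * ‖(u j : ℕ × ℕ → ℝ) (k, 0)‖) := by
    intro k hk
    have h1 := hj k hk
    have hk1 : (0:ℝ) < (k : ℝ) + 1 := by positivity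
    have h2 : 1 / (2 * ((k : ℝ) + 1) ^ 2) ≤ ‖(u j : ℕ × ℕ → ℝ) (k, 0)‖ :=
      h1.le.trans (le_abs_self _)
    rw [div_le_iff₀ (by positivity)] at h2 ⊢
    nlinarith
  have hle : ∑ k ∈ Finset.range K, (1 / ((k : ℝ) + 1))
      ≤ 2 * ∑ k ∈ Finset.range K, (((k : ℝ) + 1) * ‖(u j : ℕ × ℕ → ℝ) (k, 0)‖) := by
    rw [Finset.mul_sum]
    exact Finset.sum_le_sum key
  have hle2 : ∑ k ∈ Finset.range K, (((k : ℝ) + 1) * ‖(u j : ℕ × ℕ → ℝ) (k, 0)‖) ≤ M := by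
    calc ∑ k ∈ Finset.range K, (((k : ℝ) + 1) * ‖(u j : ℕ × ℕ → ℝ) (k, 0)‖)
        ≤ ∑ k ∈ Finset.range K, ∑' n : ℕ, ‖(u j : ℕ × ℕ → ℝ) (k, n)‖ :=
          Finset.sum_le_sum (fun k _ => tail_bound (huA j) k)
      _ ≤ ‖u j‖ := sum_rows_le (u j) _
      _ ≤ M := hM j
  linarith

lemma A14_submodule : ∃ p : Submodule ℝ E1, (p : Set E1) = A14 := by
  refine ⟨{ carrier := A14, add_mem' := ?_, zero_mem' := ?_, smul_mem' := ?_ }, rfl⟩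
  · intro a b ha hb k
    simp only [lp.coeFn_add, Pi.add_apply]
    rw [Summable.tsum_add (tail_summable a k) (tail_summable b k), ha k, hb k]
    ring
  · intro k
    simp [lp.coeFn_zero]
  · intro c x hx k
    simp only [lp.coeFn_smul, Pi.smul_apply, smul_eq_mul]
    rw [tsum_mul_left, hx k]
    ring

set_option maxHeartbeats 1000000 in
lemma mem_seqDOne_of_finsupp (g : E1) (s : Finset (ℕ × ℕ))
    (hg : ∀ q ∉ s, (g : ℕ × ℕ → ℝ) q = 0) : g ∈ seqDOne A14 := by
  classical
  set m : ℕ := s.sup Prod.snd with hm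
  set N : ℕ := m + 1 with hNdef
  have hN : ∀ q ∈ s, q.2 < N := fun q hq =>
    Nat.lt_succ_of_le (Finset.le_sup (f := Prod.snd) hq)
  set rows : Finset ℕ := s.image Prod.fst with hrows
  have hnotrow : ∀ a, a ∉ rows → ∀ b, (g : ℕ × ℕ → ℝ) (a, b) = 0 := by
    intro a ha b
    refine hg _ (fun hmem => ha ?_)
    exact Finset.mem_image_of_mem Prod.fst hmem
  set c : ℕ → ℝ := fun k =>
    ((k : ℝ) + 1) * (g : ℕ × ℕ → ℝ) (k, 0) - ∑ n ∈ Finset.range N, (g : ℕ × ℕ → ℝ) (k, n + 1)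
    with hc
  set u : ℕ → E1 := fun j => g + ∑ k ∈ rows, lp.single 1 (k, N + j) (c k) with hu
  have hval : ∀ j q, (u j : ℕ × ℕ → ℝ) q
      = (g : ℕ × ℕ → ℝ) q + ∑ k ∈ rows, (if q = (k, N + j) then c k else 0) := by
    intro j q
    simp only [hu, lp.coeFn_add, Pi.add_apply, lp.coeFn_sum, Finset.sum_apply]
    congr 1
    refine Finset.sum_congr rfl fun k _ => ?_
    by_cases h : q = (k, N + j)
    · subst h; rw [lp.single_apply_self, if_pos rfl]
    · rw [lp.single_apply_ne 1 _ _ h, if_neg h]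
  have hval1 : ∀ j (q : ℕ × ℕ), q.2 ≠ N + j → (u j : ℕ × ℕ → ℝ) q = (g : ℕ × ℕ → ℝ) q := by
    intro j q hq
    rw [hval]
    have h0 : ∀ k ∈ rows, (if q = (k, N + j) then c k else 0) = 0 := by
      intro k _
      exact if_neg (fun h => hq (by rw [h]))
    rw [Finset.sum_congr rfl h0, Finset.sum_const_zero, add_zero]
  refine ⟨u, ?_, ?_, ?_⟩
  · -- membership in A14
    intro j k
    have hgN : ∀ b, N ≤ b → (g : ℕ × ℕ → ℝ) (k, b) = 0 := by
      intro b hb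
      refine hg _ (fun hmem => ?_)
      exact absurd (hN _ hmem) (by simpa using hb.not_gt)
    have hL : (u j : ℕ × ℕ → ℝ) (k, 0) = (g : ℕ × ℕ → ℝ) (k, 0) :=
      hval1 j (k, 0) (by simp [hNdef]; omega)
    have hS : ∀ n : ℕ, (∑ k' ∈ rows, (if ((k, n + 1) : ℕ × ℕ) = (k', N + j) then c k' else 0))
        = if n = m + j then (if k ∈ rows then c k else 0) else 0 := by
      intro n
      by_cases hn : n = m + j
      · subst hn
        rw [if_pos rfl]
        have harith : N + j = m + j + 1 := by omega
        have : ∀ k' ∈ rows, (if ((k, m + j + 1) : ℕ × ℕ) = (k', N + j) then c k' else 0)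
            = if k = k' then c k' else 0 := by
          intro k' _
          rw [harith]
          simp [Prod.mk.injEq]
        rw [Finset.sum_congr rfl this, Finset.sum_ite_eq]
      · rw [if_neg hn]
        refine Finset.sum_eq_zero fun k' _ => if_neg ?_
        simp only [Prod.mk.injEq, hNdef]
        rintro ⟨_, h2⟩
        omega
    have htail : ∀ n ∉ Finset.range (N + j + 1), (u j : ℕ × ℕ → ℝ) (k, n + 1) = 0 := by
      intro n hn
      simp only [Finset.mem_range] at hn
      push_neg at hn
      rw [hval1 j (k, n + 1) (by simp; omega)]
      exact hgN _ (by omega)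
    have htsum : ∑' n : ℕ, (u j : ℕ × ℕ → ℝ) (k, n + 1)
        = ∑ n ∈ Finset.range N, (g : ℕ × ℕ → ℝ) (k, n + 1)
          + (if k ∈ rows then c k else 0) := by
      rw [tsum_eq_sum htail]
      have hterm : ∀ n ∈ Finset.range (N + j + 1), (u j : ℕ × ℕ → ℝ) (k, n + 1)
          = (g : ℕ × ℕ → ℝ) (k, n + 1)
            + (if n = m + j then (if k ∈ rows then c k else 0) else 0) := by
        intro n _
        rw [hval j (k, n + 1), hS n]
      rw [Finset.sum_congr rfl hterm, Finset.sum_add_distrib]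
      congr 1
      · refine (Finset.sum_subset (Finset.range_subset_range.2 (by omega)) ?_).symm
        intro n _ hn
        simp only [Finset.mem_range] at hn
        push_neg at hn
        exact hgN _ (by omega)
      · rw [Finset.sum_ite_eq' (Finset.range (N + j + 1)) (m + j)]
        rw [if_pos (Finset.mem_range.2 (by omega))]
    by_cases hk : k ∈ rows
    · rw [hL, htsum, if_pos hk, hc]
      have hk1 : ((k : ℝ) + 1) ≠ 0 := by positivity
      field_simp
      ring
    · rw [hL, htsum, if_neg hk]
      rw [Finset.sum_eq_zero (fun n _ => hnotrow k hk (n + 1)), hnotrow k hk 0]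
      simp
  · -- bound
    refine ⟨‖g‖ + ∑ k ∈ rows, |c k|, fun j => ?_⟩
    simp only [hu]
    refine le_trans (norm_add_le _ _) (add_le_add_right ?_ _)
    refine le_trans (norm_sum_le _ _) (le_of_eq (Finset.sum_congr rfl fun k _ => ?_))
    have := lp.norm_single (E := fun _ : ℕ × ℕ => ℝ)
      (by norm_num : (0 : ENNReal) < 1) (k, N + j) (c k)
    simpa [Real.norm_eq_abs] using this
  · -- pointwise convergence
    intro p
    refine Tendsto.congr' ?_ tendsto_const_nhds
    filter_upwards [eventually_ge_atTop (p.2 + 1)] with j hj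
    exact (hval1 j p (by omega)).symm

lemma dense_seqDOne : Dense (seqDOne A14) := by
  rw [Metric.dense_iff]
  intro f r hr
  have hsum := lp.hasSum_single (E := fun _ : ℕ × ℕ => ℝ) (p := 1) (by norm_num) f
  obtain ⟨s, hs⟩ := (Metric.tendsto_nhds.1 hsum r hr).exists
  refine ⟨∑ p ∈ s, lp.single 1 p ((f : ℕ × ℕ → ℝ) p), Metric.mem_ball.2 hs, ?_⟩
  refine mem_seqDOne_of_finsupp _ s fun q hq => ?_
  rw [lp.coeFn_sum, Finset.sum_apply]
  exact Finset.sum_eq_zero fun p hp =>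
    lp.single_apply_ne 1 p _ (fun h => hq (h ▸ hp))

/-- `A14` is a linear subspace of `ℓ¹(ℕ×ℕ) = c₀(ℕ×ℕ)*` whose set `A⁽¹⁾` of weak* limits of
bounded sequences is norm-dense in `ℓ¹(ℕ×ℕ)` but proper: the element `x` with
`x(k,0) = 1/(k+1)²` and `x(k,n) = 0` for `n ≥ 1` does not belong to `A⁽¹⁾`. -/
theorem l1_example :
    (∃ p : Submodule ℝ (lp (fun _ : ℕ × ℕ => ℝ) 1),
      (p : Set (lp (fun _ : ℕ × ℕ => ℝ) 1)) = A14) ∧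
    Dense (seqDOne A14) ∧
    (∀ x : lp (fun _ : ℕ × ℕ => ℝ) 1,
      (∀ k : ℕ, (x : ℕ × ℕ → ℝ) (k, 0) = 1 / ((k : ℝ) + 1) ^ 2) →
      (∀ k n : ℕ, (x : ℕ × ℕ → ℝ) (k, n + 1) = 0) →
      x ∉ seqDOne A14) := by
  refine ⟨A14_submodule, dense_seqDOne, ?_⟩
  rintro x hx0 _ ⟨u, huA, ⟨M, hM⟩, hconv⟩
  exact part3 x hx0 u huA M hM hconv
end

section
/- Let X be a Banach space and A ⊆ X* a weak* dense linear subspace such that A⁽¹⁾ = X* (i.e., A is norming: ⋃_n weak*-closure(A ∩ n·B_{X*}) = X*). Then for every r > 0 the open set U = A + r·B_{X*} is boundedly regular: every bounded subset of X* is contained in the weak* closure of some U-bounded subset of U. -/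
open Metric NormedSpace Pointwise

variable {X : Type*} [NormedAddCommGroup X] [NormedSpace ℝ X]

lemma wscl_isClosed (S : Set (StrongDual ℝ X)) : IsClosed (wscl S) :=
  isClosed_closure.preimage Dual.toWeakDual_continuous

lemma smul_mem_wscl {S : Set (StrongDual ℝ X)} {x : StrongDual ℝ X} (s : ℝ) (hx : x ∈ wscl S) :
    s • x ∈ wscl (s • S) := by
  have h1 : StrongDual.toWeakDual (s • x) = s • StrongDual.toWeakDual x := map_smul _ _ _
  have h2 : (StrongDual.toWeakDual '' (s • S)) = s • (StrongDual.toWeakDual '' S) := by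
    ext y
    simp only [Set.mem_image, Set.mem_smul_set]
    constructor
    · rintro ⟨z, ⟨w, hw, rfl⟩, rfl⟩; exact ⟨_, ⟨w, hw, rfl⟩, (map_smul _ _ _).symm⟩
    · rintro ⟨z, ⟨w, hw, rfl⟩, rfl⟩; exact ⟨s • w, ⟨w, hw, rfl⟩, map_smul _ _ _⟩
  show StrongDual.toWeakDual (s • x) ∈ closure (StrongDual.toWeakDual '' (s • S))
  rw [h1, h2]
  have : Continuous fun y : WeakDual ℝ X => s • y := continuous_const_smul s
  have := image_closure_subset_closure_image (s := StrongDual.toWeakDual '' S) this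
  apply this
  exact ⟨_, hx, rfl⟩

lemma neg_mem_wscl {S : Set (StrongDual ℝ X)} {x : StrongDual ℝ X} (hx : x ∈ wscl S) :
    -x ∈ wscl (-S) := by
  have h2 : (StrongDual.toWeakDual '' (-S)) = -(StrongDual.toWeakDual '' S) := by
    ext y
    simp only [Set.mem_image, Set.mem_neg]
    constructor
    · rintro ⟨z, hz, rfl⟩
      exact ⟨-z, hz, map_neg _ _⟩
    · rintro ⟨z, hz, hzz⟩
      exact ⟨-z, by simpa using hz, by rw [map_neg, hzz, neg_neg]⟩
  show StrongDual.toWeakDual (-x) ∈ closure (StrongDual.toWeakDual '' (-S))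
  rw [map_neg, h2]
  have hcont : Continuous fun y : WeakDual ℝ X => -y := continuous_neg
  have := image_closure_subset_closure_image (s := StrongDual.toWeakDual '' S) hcont
    (Set.mem_image_of_mem _ hx)
  have h' := by simpa [Set.image_neg_eq_neg] using this
  exact h'

lemma wscl_convex {S : Set (StrongDual ℝ X)} (hS : Convex ℝ S) : Convex ℝ (wscl S) := by
  have h1 : Convex ℝ (StrongDual.toWeakDual '' S) := by
    have := hS.linear_image (StrongDual.toWeakDual (𝕜 := ℝ) (E := X)).toLinearMap
    simpa using this
  have h2 : Convex ℝ (closure (StrongDual.toWeakDual '' S)) := h1.closure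
  have := h2.linear_preimage (StrongDual.toWeakDual (𝕜 := ℝ) (E := X)).toLinearMap
  simpa [wscl] using this

/-- If `A ⊆ X*` is a weak* dense linear subspace with `A⁽¹⁾ = X*` (i.e. `A` is norming),
then for every `r > 0` the set `U = A + r B_{X*}` is boundedly regular: every bounded
subset of `X*` is contained in the weak* closure of some `U`-bounded set. -/
theorem norming_subspace_boundedly_regular [CompleteSpace X]
    (A : Submodule ℝ (StrongDual ℝ X))
    (hdense : wscl (A : Set (StrongDual ℝ X)) = Set.univ)
    (hnorming : dOne (A : Set (StrongDual ℝ X)) = Set.univ)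
    (r : ℝ) (hr : 0 < r) :
    ∀ C : Set (StrongDual ℝ X), Bornology.IsBounded C →
      ∃ B, UBounded ((A : Set (StrongDual ℝ X)) + ball (0 : StrongDual ℝ X) r) B ∧ C ⊆ wscl B := by
  intro C hC
  obtain ⟨R₀, hR₀⟩ := hC.subset_closedBall 0
  set R : ℝ := max R₀ 0 with hRdef
  have hCR : C ⊆ closedBall 0 R := hR₀.trans (closedBall_subset_closedBall (le_max_left _ _))
  have hR : 0 ≤ R := le_max_right _ _
  -- Baire category
  set f : ℕ → Set (StrongDual ℝ X) := fun n => wscl ((A : Set (StrongDual ℝ X)) ∩ ball 0 (n : ℝ)) with hf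
  have hclosed : ∀ n, IsClosed (f n) := fun n => wscl_isClosed _
  have hunion : ⋃ n, f n = Set.univ := hnorming
  have hbaire : BaireSpace (StrongDual ℝ X) := BaireSpace.of_completelyPseudoMetrizable
  obtain ⟨n, x, hx⟩ := nonempty_interior_of_iUnion_of_closed hclosed hunion
  obtain ⟨ε, hε, hball⟩ := Metric.isOpen_iff.mp isOpen_interior x hx
  have hball' : ball x ε ⊆ f n := hball.trans interior_subset
  -- symmetry: the ball around `-x` is also contained
  have hnegball : ball (-x) ε ⊆ f n := by
    intro y hy
    have h1 : -y ∈ ball x ε := by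
      rw [mem_ball] at hy ⊢
      have hd : dist (-y) x = dist y (-x) := by
        rw [← dist_neg_neg y (-x), neg_neg]
      rw [hd]; exact hy
    have h2 : -y ∈ f n := hball' h1
    have h3 : -(-y) ∈ wscl (-((A : Set (StrongDual ℝ X)) ∩ ball 0 (n : ℝ))) := neg_mem_wscl h2
    have h4 : -((A : Set (StrongDual ℝ X)) ∩ ball 0 (n : ℝ)) = (A : Set (StrongDual ℝ X)) ∩ ball 0 (n : ℝ) := by
      ext z
      simp only [Set.mem_neg, Set.mem_inter_iff, SetLike.mem_coe, mem_ball, dist_zero_right]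
      constructor
      · rintro ⟨h5, h6⟩
        exact ⟨by simpa using A.neg_mem h5, by simpa using h6⟩
      · rintro ⟨h5, h6⟩
        exact ⟨A.neg_mem h5, by simpa using h6⟩
    rw [h4, neg_neg] at h3
    exact h3
  -- convexity gives a ball around 0
  have hconv : Convex ℝ (f n) := by
    apply wscl_convex
    exact (A.convex).inter (convex_ball _ _)
  have hzball : ball (0 : StrongDual ℝ X) ε ⊆ f n := by
    intro y hy
    have hy' : ‖y‖ < ε := by simpa using hy
    have ha : x + y ∈ f n := hball' (by simpa [dist_eq_norm] using hy')
    have hb : -x + y ∈ f n := hnegball (by simpa [dist_eq_norm] using hy')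
    have := hconv ha hb (by norm_num : (0:ℝ) ≤ 1/2) (by norm_num : (0:ℝ) ≤ 1/2) (by norm_num)
    have heq : (1/2 : ℝ) • (x + y) + (1/2 : ℝ) • (-x + y) = y := by
      rw [smul_add, smul_add, smul_neg]
      have h12 : (1/2 : ℝ) • y + (1/2 : ℝ) • y = y := by
        rw [← add_smul]; norm_num
      calc (1/2 : ℝ) • x + (1/2 : ℝ) • y + (-((1/2 : ℝ) • x) + (1/2 : ℝ) • y)
          = (1/2 : ℝ) • y + (1/2 : ℝ) • y := by abel
        _ = y := h12
    rwa [heq] at this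
  -- scaling
  set s : ℝ := (R + 1) / ε with hs
  have hspos : 0 < s := div_pos (by linarith) hε
  set M : ℝ := s * (n + 1) with hM
  refine ⟨(A : Set (StrongDual ℝ X)) ∩ ball 0 M, ⟨?_, ?_, r, hr, ?_⟩, ?_⟩
  · rintro y ⟨hyA, -⟩
    exact ⟨y, hyA, 0, mem_ball_self hr, add_zero y⟩
  · exact (isBounded_ball).subset Set.inter_subset_right
  · rintro z ⟨hzA, -⟩ y hy
    by_contra hlt
    push_neg at hlt
    exact hy ⟨z, hzA, y - z, by simpa [mem_ball, dist_eq_norm] using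
      (by rw [dist_comm] at hlt; simpa [dist_eq_norm] using hlt : ‖y - z‖ < r), add_sub_cancel z y⟩
  · intro y hy
    have hyR : ‖y‖ ≤ R := by simpa using hCR hy
    have hz : s⁻¹ • y ∈ ball (0 : StrongDual ℝ X) ε := by
      rw [mem_ball, dist_zero_right, norm_smul, norm_inv, Real.norm_of_nonneg hspos.le]
      calc s⁻¹ * ‖y‖ ≤ s⁻¹ * R := by
            apply mul_le_mul_of_nonneg_left hyR (inv_nonneg.mpr hspos.le)
        _ < ε := by
            rw [hs, inv_div, div_mul_eq_mul_div, div_lt_iff₀ (by linarith : (0:ℝ) < R + 1)]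
            nlinarith
    have h1 : s • (s⁻¹ • y) ∈ wscl (s • ((A : Set (StrongDual ℝ X)) ∩ ball 0 (n : ℝ))) :=
      smul_mem_wscl s (hzball hz)
    rw [smul_inv_smul₀ hspos.ne'] at h1
    refine wscl_mono ?_ h1
    rintro - ⟨w, ⟨hwA, hwb⟩, rfl⟩
    refine ⟨A.smul_mem s hwA, ?_⟩
    rw [mem_ball, dist_zero_right] at hwb ⊢
    rw [norm_smul, Real.norm_of_nonneg hspos.le]
    calc s * ‖w‖ ≤ s * n := mul_le_mul_of_nonneg_left hwb.le hspos.le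
      _ < M := by rw [hM]; nlinarith
end

section
/- Let X be a Banach space, A ⊆ X* convex, r > 0, U = A + r·B_{X*}, and let M ⊆ Ũ be U-bounded, say M + c·B_{X*} ⊆ U for some c > 0. Then r ≥ c/2 is forced for points of M at positive distance from A, and M ⊆ A + s·B_{X*} for any s ∈ (r − c/2, r) with s > 0; in particular there exists s ∈ (0, r) with M ⊆ A + s·B_{X*}. -/
open Metric NormedSpace Pointwise

variable {X : Type*} [NormedAddCommGroup X] [NormedSpace ℝ X]

/-- Separation lemma: if `η` is at positive distance `d` from a nonempty convex set `A`,
there is `ζ` with `‖ζ‖ ≤ 1` such that `dist (η + t ζ) A ≥ d + t/2` for all `t ≥ 0`. -/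
lemma exists_separating_direction {E : Type*} [NormedAddCommGroup E] [NormedSpace ℝ E]
    {A : Set E} (hA : Convex ℝ A) (hAne : A.Nonempty) {η : E}
    (hd : 0 < infDist η A) :
    ∃ ζ : E, ‖ζ‖ ≤ 1 ∧ ∀ t : ℝ, 0 ≤ t → ∀ a ∈ A,
      infDist η A + t / 2 ≤ ‖η + t • ζ - a‖ := by
  set d := infDist η A with hdd
  have hdisj : Disjoint (ball η d) A := by
    rw [Set.disjoint_left]
    intro x hx hxA
    have h1 : d ≤ dist η x := infDist_le_dist_of_mem hxA
    rw [mem_ball, dist_comm] at hx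
    linarith
  obtain ⟨f, u, hf1, hf2⟩ :=
    geometric_hahn_banach_open (convex_ball η d) isOpen_ball hA hdisj
  have hfne : f ≠ 0 := by
    rintro rfl
    obtain ⟨a, ha⟩ := hAne
    have h1 := hf1 η (mem_ball_self hd)
    have h2 := hf2 a ha
    simp at h1 h2
    linarith
  have hfpos : 0 < ‖f‖ := norm_pos_iff.mpr hfne
  -- every point of the ball has value < u
  have hball : ∀ z : E, ‖z‖ < 1 → f η + d * f z < u := by
    intro z hz
    have hmem : η + d • z ∈ ball η d := by
      rw [mem_ball, dist_eq_norm]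
      have : η + d • z - η = d • z := by abel
      rw [this, norm_smul, Real.norm_of_nonneg hd.le]
      calc d * ‖z‖ < d * 1 := by exact mul_lt_mul_of_pos_left hz hd
        _ = d := mul_one d
    have := hf1 _ hmem
    simpa [mul_comm] using this
  -- hence `f η + d * ‖f‖ ≤ u`
  have hkey : f η + d * ‖f‖ ≤ u := by
    by_contra h
    push_neg at h
    have hlt : (u - f η) / d < ‖f‖ := by
      rw [div_lt_iff₀ hd]
      nlinarith
    obtain ⟨z, hz1, hz2⟩ := f.exists_lt_apply_of_lt_opNorm hlt
    rcases le_or_gt (f z) 0 with hle | hlt'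
    · have : f (-z) = -(f z) := by simp
      have hz2' : (u - f η) / d < f (-z) := by
        rw [this]
        calc (u - f η) / d < ‖f z‖ := hz2
          _ = -(f z) := by rw [Real.norm_eq_abs, abs_of_nonpos hle]
      have := hball (-z) (by simpa using hz1)
      rw [div_lt_iff₀ hd] at hz2'
      nlinarith
    · have hz2' : (u - f η) / d < f z := by
        calc (u - f η) / d < ‖f z‖ := hz2
          _ = f z := by rw [Real.norm_eq_abs, abs_of_pos hlt']
      have := hball z hz1
      rw [div_lt_iff₀ hd] at hz2'
      nlinarith
  -- pick ζ with ‖ζ‖ ≤ 1 and f ζ ≤ -‖f‖/2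
  obtain ⟨z, hz1, hz2⟩ := f.exists_lt_apply_of_lt_opNorm (half_lt_self hfpos)
  have habs : ‖f‖ / 2 < |f z| := by rwa [Real.norm_eq_abs] at hz2
  set ζ : E := if f z ≤ 0 then z else -z with hζ
  have hζnorm : ‖ζ‖ ≤ 1 := by
    rw [hζ]; split <;> simp [le_of_lt hz1, norm_neg] <;> linarith
  have hζval : f ζ ≤ -(‖f‖ / 2) := by
    rw [hζ]
    split
    · rename_i hle
      rw [abs_of_nonpos hle] at habs
      linarith
    · rename_i hgt
      push_neg at hgt
      rw [abs_of_pos hgt] at habs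
      simp only [map_neg]
      linarith
  refine ⟨ζ, hζnorm, fun t ht a ha => ?_⟩
  have hfa : u ≤ f a := hf2 a ha
  have hap : d * ‖f‖ + t * (‖f‖ / 2) ≤ f (a - (η + t • ζ)) := by
    have : f (a - (η + t • ζ)) = f a - f η - t * f ζ := by
      simp [map_sub, map_add, map_smul, smul_eq_mul]; ring
    rw [this]
    have h1 : -(t * f ζ) ≥ t * (‖f‖ / 2) := by nlinarith
    linarith
  have hfle : f (a - (η + t • ζ)) ≤ ‖f‖ * ‖a - (η + t • ζ)‖ :=
    le_trans (le_abs_self _) (by simpa [Real.norm_eq_abs] using f.le_opNorm (a - (η + t • ζ)))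
  have : ‖f‖ * (d + t / 2) ≤ ‖f‖ * ‖a - (η + t • ζ)‖ := by nlinarith
  have hfin : d + t / 2 ≤ ‖a - (η + t • ζ)‖ := le_of_mul_le_mul_left this hfpos
  calc d + t / 2 ≤ ‖a - (η + t • ζ)‖ := hfin
    _ = ‖η + t • ζ - a‖ := norm_sub_rev _ _

/-- Let `A ⊆ X*` be convex, `r > 0`, `U = A + r B_{X*}`, and let `M` be a bounded set with
`M + c B_{X*} ⊆ U` for some `c > 0`. Then every point of `M` at positive distance from `A`
forces `c/2 ≤ r`; moreover `M ⊆ A + s B_{X*}` for every `s ∈ (r - c/2, r)` with `s > 0`,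
and in particular there is `s ∈ (0, r)` with `M ⊆ A + s B_{X*}`. -/
theorem ubounded_subset_smaller_tube [CompleteSpace X]
    (A : Set (StrongDual ℝ X)) (hA : Convex ℝ A) (r : ℝ) (hr : 0 < r)
    (M : Set (StrongDual ℝ X)) (hMb : Bornology.IsBounded M) (c : ℝ) (hc : 0 < c)
    (hMc : M + ball (0 : StrongDual ℝ X) c ⊆ A + ball (0 : StrongDual ℝ X) r) :
    (∀ η ∈ M, 0 < infDist η A → c / 2 ≤ r) ∧
      (∀ s : ℝ, r - c / 2 < s → 0 < s →
        M ⊆ A + ball (0 : StrongDual ℝ X) s) ∧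
      (∃ s : ℝ, 0 < s ∧ s < r ∧ M ⊆ A + ball (0 : StrongDual ℝ X) s) := by
  -- membership in the tube `A + ball 0 r`
  have hmemM : ∀ η ∈ M, ∃ a ∈ A, dist η a < r := by
    intro η hη
    have : η ∈ A + ball (0 : StrongDual ℝ X) r := by
      apply hMc
      exact Set.mem_add.mpr ⟨η, hη, 0, by simpa using hc, add_zero η⟩
    rw [Set.mem_add] at this
    obtain ⟨a, ha, x, hx, hax⟩ := this
    refine ⟨a, ha, ?_⟩
    rw [mem_ball_zero_iff] at hx
    rw [dist_eq_norm, ← hax]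
    simpa using hx
  -- the key quantitative step
  have key : ∀ η ∈ M, 0 < infDist η A → infDist η A + c / 2 ≤ r := by
    intro η hη hd
    obtain ⟨a₀, ha₀, hda₀⟩ := hmemM η hη
    obtain ⟨ζ, hζ1, hζ2⟩ := exists_separating_direction hA ⟨a₀, ha₀⟩ hd
    have hstep : ∀ t : ℝ, 0 ≤ t → t < c → infDist η A + t / 2 < r := by
      intro t ht htc
      have hmem : η + t • ζ ∈ M + ball (0 : StrongDual ℝ X) c := by
        refine Set.mem_add.mpr ⟨η, hη, t • ζ, ?_, rfl⟩
        rw [mem_ball_zero_iff, norm_smul, Real.norm_of_nonneg ht]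
        nlinarith
      have := hMc hmem
      rw [Set.mem_add] at this
      obtain ⟨a, ha, x, hx, hax⟩ := this
      rw [mem_ball_zero_iff] at hx
      have h1 : infDist η A + t / 2 ≤ ‖η + t • ζ - a‖ := hζ2 t ht a ha
      have h2 : ‖η + t • ζ - a‖ = ‖x‖ := by rw [← hax]; congr 1; abel
      rw [h2] at h1
      linarith
    have hdr : infDist η A < r := by
      have h := infDist_le_dist_of_mem (x := η) ha₀
      linarith
    by_contra h
    push_neg at h
    set d := infDist η A
    set t : ℝ := (2 * (r - d) + c) / 2 with htdef
    have ht0 : 0 ≤ t := by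
      have : 0 < r - d := by linarith
      rw [htdef]; linarith
    have htc : t < c := by
      have : 2 * (r - d) < c := by linarith
      rw [htdef]; linarith
    have := hstep t ht0 htc
    rw [htdef] at this
    linarith
  refine ⟨?_, ?_, ?_⟩
  · intro η hη hd
    have := key η hη hd
    have h0 : 0 ≤ infDist η A := infDist_nonneg
    linarith
  · intro s hs1 hs2 η hη
    obtain ⟨a₀, ha₀, hda₀⟩ := hmemM η hη
    have hdist : infDist η A < s := by
      rcases eq_or_lt_of_le (infDist_nonneg (x := η) (s := A)) with h0 | hpos
      · linarith [h0.symm]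
      · have := key η hη hpos
        linarith
    obtain ⟨a, ha, hdista⟩ := (infDist_lt_iff ⟨a₀, ha₀⟩).mp hdist
    rw [Set.mem_add]
    exact ⟨a, ha, η - a, by rwa [mem_ball_zero_iff, ← dist_eq_norm], by abel⟩
  · refine ⟨r - min c r / 4, ?_, ?_, ?_⟩
    · have : min c r ≤ r := min_le_right c r
      linarith
    · have : 0 < min c r := lt_min hc hr
      linarith
    · intro η hη
      have h1 : r - c / 2 < r - min c r / 4 := by
        have h2 : min c r ≤ c := min_le_left c r
        have : 0 < min c r := lt_min hc hr
        linarith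
      have h2 : 0 < r - min c r / 4 := by
        have : min c r ≤ r := min_le_right c r
        linarith
      -- reuse the second part
      obtain ⟨a₀, ha₀, hda₀⟩ := hmemM η hη
      have hdist : infDist η A < r - min c r / 4 := by
        rcases eq_or_lt_of_le (infDist_nonneg (x := η) (s := A)) with h0 | hpos
        · linarith [h0.symm]
        · have := key η hη hpos
          have h3 : min c r ≤ c := min_le_left c r
          linarith
      obtain ⟨a, ha, hdista⟩ := (infDist_lt_iff ⟨a₀, ha₀⟩).mp hdist
      rw [Set.mem_add]
      exact ⟨a, ha, η - a, by rwa [mem_ball_zero_iff, ← dist_eq_norm], by abel⟩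
end
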